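/- If σ is an ownership graph, the edge (e, ρ) is in σ, and there exists an entity e' ≠ e with the edge (e', ρ) in σ, then σ \ {(e, ρ)} is an ownership graph. -/

import Mathlib

open Relation

variable {P R : Type*}

abbrev Entity (P R : Type*) := P ⊕ R

def EdgeRel (σ : Set (Entity P R × Entity P R)) (a b : Entity P R) : Prop := (a, b) ∈ σ

def Acyclic (σ : Set (Entity P R × Entity P R)) : Prop :=
  ∀ x : Entity P R, ¬ Relation.TransGen (EdgeRel σ) x x

def Appears (σ : Set (Entity P R × Entity P R)) (x : Entity P R) : Prop :=
  ∃ y : Entity P R, (x, y) ∈ σ ∨ (y, x) ∈ σ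

def IsOwnershipGraph (σ : Set (Entity P R × Entity P R)) : Prop :=
  (∀ (e : Entity P R) (p : P), (e, Sum.inl p) ∉ σ) ∧
  (∀ r : R, Appears σ (Sum.inr r) → ∃ e : Entity P R, (e, Sum.inr r) ∈ σ) ∧
  Acyclic σ

def root (σ : Set (Entity P R × Entity P R)) (x : Entity P R) : Set P :=
  {π : P | Relation.ReflTransGen (EdgeRel σ) (Sum.inl π) x}

def Fresh (σ : Set (Entity P R × Entity P R)) (x : Entity P R) : Prop :=
  ∀ y : Entity P R, (x, y) ∉ σ ∧ (y, x) ∉ σ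

theorem release_preserves_ownershipGraph (σ : Set (Entity P R × Entity P R)) (ρ : R)
    (e : Entity P R) (h : IsOwnershipGraph σ) (he : (e, Sum.inr ρ) ∈ σ)
    (hother : ∃ e' : Entity P R, e' ≠ e ∧ (e', Sum.inr ρ) ∈ σ) :
    IsOwnershipGraph (σ \ {(e, Sum.inr ρ)}) := by
  obtain ⟨hP, hR, hA⟩ := h
  obtain ⟨e', hne, he'⟩ := hother
  refine ⟨fun x p hx => hP x p hx.1, ?_, ?_⟩
  · rintro r ⟨y, hy | hy⟩
    · by_cases hr : r = ρ
      · subst hr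
        exact ⟨e', he', fun hmem => hne (congrArg Prod.fst hmem)⟩
      · obtain ⟨e0, h0⟩ := hR r ⟨y, Or.inl hy.1⟩
        refine ⟨e0, h0, fun hmem => hr ?_⟩
        have := congrArg Prod.snd hmem
        simpa using this
    · exact ⟨y, hy⟩
  · intro x hx
    exact hA x (TransGen.mono (p := EdgeRel σ) (fun a b (hab : EdgeRel (σ \ {(e, Sum.inr ρ)}) a b) => hab.1) x x hx)
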